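/- Let K be a field and W ⊆ K^E a realization of a connected matroid M. Suppose E = E₁ ⊔ E₂ is a 2-separation of M. Then, up to nonzero square constant factors (for suitable choices of bases), the configuration polynomial satisfies ψ_W = ψ_{W/E₁} · ψ_{W|_{E₁}} + ψ_{W|_{E₂}} · ψ_{W/E₂}. -/

import Mathlib

open scoped BigOperators

namespace Config

variable {K : Type} [Field K] {E : Type} [Fintype E] [DecidableEq E]

/-- The coordinate functional `e^∨` of `K^E` restricted to a subspace `W ⊆ K^E`. -/
noncomputable def coordFun (W : Submodule K (E → K)) (e : E) : W →ₗ[K] K :=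
  (LinearMap.proj e).comp W.subtype

/-- `S ⊆ E` is independent in the matroid `M_W` realized by the configuration `W`:
the restricted coordinate functionals `(e^∨|_W)_{e ∈ S}` are linearly independent. -/
def Indep (W : Submodule K (E → K)) (S : Finset E) : Prop :=
  LinearIndependent K (fun e : S => coordFun W e)

/-- A circuit of the matroid `M_W`: a minimal dependent subset of `E`. -/
def IsCircuit (W : Submodule K (E → K)) (C : Finset E) : Prop :=
  ¬ Indep W C ∧ ∀ D ⊂ C, Indep W D

/-- The matroid `M_W` is connected: the ground set is nonempty and any two distinct
elements lie on a common circuit. -/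
def Connected (W : Submodule K (E → K)) : Prop :=
  Nonempty E ∧ ∀ e f : E, e ≠ f → ∃ C : Finset E, IsCircuit W C ∧ e ∈ C ∧ f ∈ C

/-- `w` is a (linear) basis of the configuration `W ⊆ K^E`. -/
def IsBasisOf {r : ℕ} (w : Fin r → E → K) (W : Submodule K (E → K)) : Prop :=
  LinearIndependent K w ∧ Submodule.span K (Set.range w) = W

/-- The coefficient `c_{W,B} = (det (w^i_e)_{1≤i≤r, e∈B})²`, the squared determinant of
the `r × r` submatrix of the coefficient matrix of `w` with column set `B` (the square
is independent of the chosen ordering of the columns). -/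
noncomputable def cSq {r : ℕ} (w : Fin r → E → K) (B : Finset E) : K :=
  if h : B.card = r then
    (Matrix.det (Matrix.of fun i j : Fin r =>
      w i ((Finset.equivFinOfCardEq h).symm j : E))) ^ 2
  else 0

/-- The configuration polynomial `ψ_W = ∑_B c_{W,B} · x^B` computed from the basis `w`
(the coefficient `c_{W,B}` vanishes unless `B` is a basis of the matroid `M_W`). -/
noncomputable def psi {r : ℕ} (w : Fin r → E → K) : MvPolynomial E K :=
  ∑ B ∈ Finset.univ.powersetCard r,
    MvPolynomial.C (cSq w B) * ∏ e ∈ B, MvPolynomial.X e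

/-- The rank in `M_W` of a subset `S ⊆ E`: the dimension of the image of `W`
under the projection onto the coordinates in `S`. -/
noncomputable def rkOn (W : Submodule K (E → K)) (S : Finset E) : ℕ :=
  Module.finrank K (W.map (LinearMap.funLeft K K (fun e : {x : E // x ∈ S} => (e : E))))

/-- `S` is a `k`-separation of the matroid `M_W`:
`λ(S) = rk S + rk Sᶜ − rk M < k ≤ min (|S|, |Sᶜ|)`. -/
def KSep (W : Submodule K (E → K)) (k : ℕ) (S : Finset E) : Prop :=
  rkOn W S + rkOn W Sᶜ < rkOn W Finset.univ + k ∧ k ≤ S.card ∧ k ≤ Sᶜ.card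

/-- The matroid `M_W` is 3-connected: it has no 1-separation and no 2-separation. -/
def ThreeConnected (W : Submodule K (E → K)) : Prop :=
  ∀ S : Finset E, ¬ KSep W 1 S ∧ ¬ KSep W 2 S

/-- The restriction configuration `W|_F ⊆ K^F`: the image of `W` under the
coordinate projection `K^E ↠ K^F`. -/
noncomputable def restrictConfig (W : Submodule K (E → K)) (F : Finset E) :
    Submodule K ({x : E // x ∈ F} → K) :=
  W.map (LinearMap.funLeft K K (fun x : {x : E // x ∈ F} => (x : E)))

/-- The deletion configuration `W ∖ F = W|_{E ∖ F} ⊆ K^{E ∖ F}`. -/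
noncomputable def deleteConfig (W : Submodule K (E → K)) (F : Finset E) :
    Submodule K ({x : E // x ∉ F} → K) :=
  W.map (LinearMap.funLeft K K (fun x : {x : E // x ∉ F} => (x : E)))

/-- The contraction configuration `W/F = W ∩ K^{E ∖ F} ⊆ K^{E ∖ F}`: the vectors of `W`
vanishing on `F`, viewed in the coordinates `E ∖ F`. -/
noncomputable def contractConfig (W : Submodule K (E → K)) (F : Finset E) :
    Submodule K ({x : E // x ∉ F} → K) :=
  (W ⊓ LinearMap.ker (LinearMap.funLeft K K (fun x : {x : E // x ∈ F} => (x : E)))).map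
    (LinearMap.funLeft K K (fun x : {x : E // x ∉ F} => (x : E)))

lemma det_sq_submatrix {m n : Type*} [DecidableEq m] [Fintype m] [DecidableEq n] [Fintype n]
    (M : Matrix m m K) (e f : n ≃ m) :
    (Matrix.det (M.submatrix e f)) ^ 2 = (Matrix.det M) ^ 2 := by
  have h1 : M.submatrix ⇑e ⇑f = (M.submatrix f f).submatrix ⇑(e.trans f.symm) id := by
    ext i j; simp [Matrix.submatrix]
  have h2 := Matrix.det_permute (e.trans f.symm) (M.submatrix f f)
  have h3 : Matrix.det (M.submatrix f f) = Matrix.det M :=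
    Matrix.det_submatrix_equiv_self f M
  rw [h1]
  have : ((M.submatrix ⇑f ⇑f).submatrix ⇑(e.trans f.symm) id) =
      (M.submatrix f f).submatrix (⇑(e.trans f.symm)) (⇑(Equiv.refl n)) := rfl
  rw [this]
  have h2' : Matrix.det ((M.submatrix ⇑f ⇑f).submatrix ⇑(e.trans f.symm) (⇑(Equiv.refl n))) =
      (Equiv.Perm.sign (e.trans f.symm) : ℤ) * Matrix.det (M.submatrix f f) := by
    simpa using Matrix.det_permute (e.trans f.symm) (M.submatrix f f)
  rw [h2', h3, mul_pow]
  have : ((Equiv.Perm.sign (e.trans f.symm) : ℤ) : K) ^ 2 = 1 := by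
    rcases Int.units_eq_one_or (Equiv.Perm.sign (e.trans f.symm)) with h | h <;> rw [h] <;> norm_num
  rw [this, one_mul]

/-- `cSq` computed from an arbitrary row reindexing and column enumeration. -/
lemma cSq_eq {r r' : ℕ} (w : Fin r → E → K) (B : Finset E)
    (ρ : Fin r' ≃ Fin r) (e : Fin r' ≃ {x : E // x ∈ B}) :
    cSq w B = (Matrix.det (Matrix.of fun i j : Fin r' => w (ρ i) ((e j : E)))) ^ 2 := by
  have hcard : B.card = r := by
    have h1 : Fintype.card (Fin r') = Fintype.card {x : E // x ∈ B} := Fintype.card_congr e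
    have h2 : Fintype.card (Fin r') = Fintype.card (Fin r) := Fintype.card_congr ρ
    simpa [Fintype.card_coe] using (h2.symm.trans h1).symm
  rw [cSq, dif_pos hcard]
  set M : Matrix (Fin r) (Fin r) K :=
    Matrix.of fun i j : Fin r => w i ((Finset.equivFinOfCardEq hcard).symm j : E) with hM
  have key : (Matrix.of fun i j : Fin r' => w (ρ i) ((e j : E))) =
      M.submatrix ρ (e.trans (Finset.equivFinOfCardEq hcard)) := by
    ext i j
    simp [hM, Matrix.submatrix]
  rw [key]
  exact (det_sq_submatrix M ρ (e.trans (Finset.equivFinOfCardEq hcard))).symm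

lemma cSq_ne_card {r : ℕ} (w : Fin r → E → K) {B : Finset E} (h : B.card ≠ r) :
    cSq w B = 0 := dif_neg h

lemma psi_comp_cast {r r' : ℕ} (h : r' = r) (w : Fin r → E → K) :
    psi (fun i => w (Fin.cast h i)) = psi w := by
  subst h; rfl

lemma cSq_comp_cast {r r' : ℕ} (h : r' = r) (w : Fin r → E → K) (B : Finset E) :
    cSq (fun i => w (Fin.cast h i)) B = cSq w B := by
  subst h; rfl

/-- relabelling of the ground set. -/
lemma psi_comp_equiv {E' : Type} [Fintype E'] [DecidableEq E'] {r : ℕ}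
    (σ : E' ≃ E) (w : Fin r → E → K) :
    MvPolynomial.rename ⇑σ (psi (fun i x => w i (σ x))) = psi w := by
  rw [psi, psi, map_sum]
  refine Finset.sum_nbij' (fun B => B.image σ) (fun B => B.image σ.symm) ?_ ?_ ?_ ?_ ?_
  · intro B hB
    rw [Finset.mem_powersetCard_univ] at hB ⊢
    rw [Finset.card_image_of_injective _ σ.injective, hB]
  · intro B hB
    rw [Finset.mem_powersetCard_univ] at hB ⊢
    rw [Finset.card_image_of_injective _ σ.symm.injective, hB]
  · intro B _; simp [Finset.image_image]
  · intro B _; simp [Finset.image_image]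
  · intro B hB
    rw [Finset.mem_powersetCard_univ] at hB
    rw [map_mul, MvPolynomial.rename_C, map_prod]
    have hc : cSq (fun i x => w i (σ x)) B = cSq w (B.image σ) := by
      have hcard : B.card = r := hB
      have hcard' : (B.image σ).card = r := by
        rw [Finset.card_image_of_injective _ σ.injective, hB]
      let e1 : Fin r ≃ {x : E' // x ∈ B} := (Finset.equivFinOfCardEq hcard).symm
      let e2 : {x : E' // x ∈ B} ≃ {x : E // x ∈ B.image σ} :=
        Equiv.subtypeEquiv σ (fun a => by
          constructor
          · intro ha; exact Finset.mem_image_of_mem _ ha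
          · intro ha
            rcases Finset.mem_image.mp ha with ⟨b, hb, hb2⟩
            rwa [← σ.injective hb2])
      rw [cSq_eq (fun i x => w i (σ x)) B (Equiv.refl _) e1,
        cSq_eq w (B.image σ) (Equiv.refl _) (e1.trans e2)]
      rfl
    rw [hc]
    congr 1
    rw [Finset.prod_image (fun a _ b _ h => σ.injective h)]
    simp

lemma psi_comp_perm {r : ℕ} (σ : Equiv.Perm (Fin r)) (w : Fin r → E → K) :
    psi (fun i => w (σ i)) = psi w := by
  rw [psi, psi]
  refine Finset.sum_congr rfl fun B hB => ?_
  rw [Finset.mem_powersetCard_univ] at hB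
  congr 1
  congr 1
  rw [cSq_eq (fun i => w (σ i)) B (Equiv.refl _) (Finset.equivFinOfCardEq hB).symm,
    cSq_eq w B σ (Finset.equivFinOfCardEq hB).symm]
  rfl


/-- basis change scales `psi` by the square of the determinant. -/
lemma psi_eq_of_matrix {r : ℕ} (w w' : Fin r → E → K) (P : Matrix (Fin r) (Fin r) K)
    (h : ∀ i, w' i = ∑ j, P i j • w j) :
    psi w' = MvPolynomial.C (P.det ^ 2) * psi w := by
  rw [psi, psi, Finset.mul_sum]
  refine Finset.sum_congr rfl fun B hB => ?_
  rw [Finset.mem_powersetCard_univ] at hB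
  have hc : cSq w' B = P.det ^ 2 * cSq w B := by
    rw [cSq, cSq, dif_pos hB, dif_pos hB]
    have : (Matrix.of fun i j : Fin r =>
        w' i ((Finset.equivFinOfCardEq hB).symm j : E)) =
        P * (Matrix.of fun i j : Fin r =>
          w i ((Finset.equivFinOfCardEq hB).symm j : E)) := by
      ext i j
      simp [h i, Matrix.mul_apply, Finset.sum_apply]
    rw [this, Matrix.det_mul, mul_pow]
  rw [hc, ← mul_assoc, map_mul]

lemma psi_eq_of_span {r : ℕ} {w w' : Fin r → E → K}
    (h1 : LinearIndependent K w) (h1' : LinearIndependent K w')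
    (hspan : Submodule.span K (Set.range w') = Submodule.span K (Set.range w)) :
    ∃ d : K, d ≠ 0 ∧ psi w' = MvPolynomial.C (d ^ 2) * psi w := by
  classical
  set V := Submodule.span K (Set.range w) with hV
  let b : Module.Basis (Fin r) K V := Module.Basis.span h1
  let b' : Module.Basis (Fin r) K V :=
    (Module.Basis.span h1').map (LinearEquiv.ofEq _ _ hspan)
  have hb : ∀ i, (b i : E → K) = w i := fun i => congrArg Subtype.val (Module.Basis.span_apply h1 i)
  have hb' : ∀ i, (b' i : E → K) = w' i := by
    intro i
    show ((LinearEquiv.ofEq _ _ hspan) (Module.Basis.span h1' i) : E → K) = w' i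
    rw [LinearEquiv.coe_ofEq_apply, Module.Basis.span_apply]
  set P : Matrix (Fin r) (Fin r) K := (b.toMatrix b').transpose with hP
  have hPdet : P.det ≠ 0 := by
    have hmul := Module.Basis.toMatrix_mul_toMatrix_flip b b'
    have : (b.toMatrix b').det * (b'.toMatrix b).det = 1 := by
      rw [← Matrix.det_mul, hmul, Matrix.det_one]
    have hne : (b.toMatrix b').det ≠ 0 := left_ne_zero_of_mul_eq_one this
    rwa [hP, Matrix.det_transpose]
  refine ⟨P.det, hPdet, ?_⟩
  refine psi_eq_of_matrix w w' P fun i => ?_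
  have hrepr : (b' i : E → K) = ∑ j, b.toMatrix b' j i • (b j : E → K) := by
    have := Module.Basis.sum_toMatrix_smul_self b b' i
    calc (b' i : E → K) = ((∑ j, b.toMatrix b' j i • b j : V) : E → K) := by rw [this]
    _ = ∑ j, b.toMatrix b' j i • (b j : E → K) := by
        rw [Submodule.coe_sum]; simp
  rw [← hb' i, hrepr]
  refine Finset.sum_congr rfl fun j _ => by rw [hb j, hP]; rfl


/-- vectors vanishing outside a finite set `T`. -/
def zeroOutside {n : Type} (T : Finset n) : Submodule K (n → K) where
  carrier := {f | ∀ j ∉ T, f j = 0}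
  add_mem' := fun {a b} ha hb j hj => by simp [ha j hj, hb j hj]
  zero_mem' := fun j _ => rfl
  smul_mem' := fun c f hf j hj => by simp [hf j hj]

lemma finrank_zeroOutside_le {n : Type} [Fintype n] [DecidableEq n] (T : Finset n) :
    Module.finrank K (zeroOutside (K := K) T) ≤ T.card := by
  classical
  let ρ : zeroOutside (K := K) T →ₗ[K] ({x : n // x ∈ T} → K) :=
    (LinearMap.funLeft K K (fun x : {x : n // x ∈ T} => (x : n))).comp
      (zeroOutside (K := K) T).subtype
  have hinj : Function.Injective ρ := by
    intro f g hfg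
    ext j
    by_cases hj : j ∈ T
    · exact congrFun hfg ⟨j, hj⟩
    · rw [f.2 j hj, g.2 j hj]
  have := LinearMap.finrank_le_finrank_of_injective hinj
  simpa [Module.finrank_pi, Fintype.card_coe] using this

lemma det_eq_zero_of_rows_small_support {r : ℕ} (M : Matrix (Fin r) (Fin r) K)
    (R : Finset (Fin r)) (T : Finset (Fin r)) (hT : T.card < R.card)
    (h : ∀ i ∈ R, ∀ j ∉ T, M i j = 0) : M.det = 0 := by
  classical
  rw [← Matrix.exists_vecMul_eq_zero_iff]
  -- the rows indexed by R live in zeroOutside T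
  let g : {i : Fin r // i ∈ R} → zeroOutside (K := K) T :=
    fun i => ⟨M i.1, fun j hj => h i.1 i.2 j hj⟩
  have hcard : Module.finrank K (zeroOutside (K := K) T) <
      Fintype.card {i : Fin r // i ∈ R} := by
    rw [Fintype.card_coe]
    exact lt_of_le_of_lt (finrank_zeroOutside_le T) hT
  have hnli : ¬ LinearIndependent K g := by
    intro hli
    exact absurd (hli.fintype_card_le_finrank) (not_le.mpr hcard)
  obtain ⟨c, hc0, i₀, hi₀⟩ := Fintype.not_linearIndependent_iff.mp hnli
  refine ⟨fun i => if h : i ∈ R then c ⟨i, h⟩ else 0, ?_, ?_⟩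
  · intro hzero
    apply hi₀
    have := congrFun hzero i₀.1
    simpa [i₀.2] using this
  · funext j
    have hrel := congrArg (fun (v : zeroOutside (K := K) T) => (v : Fin r → K) j) hc0
    simp only [Submodule.coe_sum, Finset.sum_apply, SetLike.val_smul, Pi.smul_apply,
      smul_eq_mul, ZeroMemClass.coe_zero, Pi.zero_apply] at hrel
    show ∑ i, (if h : i ∈ R then c ⟨i, h⟩ else 0) * M i j = 0
    have hstep : ∀ i : Fin r, (if h : i ∈ R then c ⟨i, h⟩ else 0) * M i j
        = (if h : i ∈ R then c ⟨i, h⟩ * M i j else 0) := by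
      intro i; by_cases h' : i ∈ R <;> simp [h']
    rw [Finset.sum_congr rfl fun i _ => hstep i]
    calc ∑ i : Fin r, (if h : i ∈ R then c ⟨i, h⟩ * M i j else 0)
        = ∑ i ∈ R, (if h : i ∈ R then c ⟨i, h⟩ * M i j else 0) :=
          (Finset.sum_subset (Finset.subset_univ R) (fun i _ hi => dif_neg hi)).symm
      _ = ∑ i ∈ R.attach, (if h : (i : Fin r) ∈ R then c ⟨i, h⟩ * M i j else 0) :=
          (Finset.sum_attach R _).symm
      _ = ∑ i : {i : Fin r // i ∈ R}, c i * M i.1 j := by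
          rw [← Finset.univ_eq_attach]
          exact Finset.sum_congr rfl fun i _ => by rw [dif_pos i.2]
      _ = 0 := hrel


lemma cSq_eq_zero_small {r : ℕ} (w : Fin r → E → K) (B : Finset E)
    (R : Finset (Fin r)) (T : Finset E) (hT : T.card < R.card)
    (hsupp : ∀ i ∈ R, ∀ e ∈ B, e ∉ T → w i e = 0) : cSq w B = 0 := by
  rw [cSq]
  split_ifs with h
  · have hdet : (Matrix.of fun i j : Fin r =>
        w i ((Finset.equivFinOfCardEq h).symm j : E)).det = 0 := by
      set en := (Finset.equivFinOfCardEq h).symm with hen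
      refine det_eq_zero_of_rows_small_support _ R
        (Finset.univ.filter (fun j => ((en j : E)) ∈ T)) ?_ ?_
      · refine lt_of_le_of_lt ?_ hT
        refine Finset.card_le_card_of_injOn (fun j => (en j : E)) ?_ ?_
        · intro j hj
          exact (Finset.mem_filter.mp hj).2
        · intro x _ y _ hxy
          exact en.injective (Subtype.ext hxy)
      · intro i hi j hj
        simp only [Finset.mem_filter, Finset.mem_univ, true_and] at hj
        exact hsupp i hi _ (en j).2 hj
    rw [hdet]; ring
  · rfl

lemma cSq_append {S : Finset E} {m n : ℕ}
    (a : Fin m → E → K) (b : Fin n → E → K)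
    (hzero : (∀ i e, e ∉ S → a i e = 0) ∨ (∀ i e, e ∈ S → b i e = 0))
    (B₁ : Finset {x : E // x ∈ S}) (B₂ : Finset {x : E // x ∉ S})
    (h₁ : B₁.card = m) (h₂ : B₂.card = n) :
    cSq (Fin.append a b)
      (B₁.map (Function.Embedding.subtype _) ∪ B₂.map (Function.Embedding.subtype _)) =
      cSq (fun i (x : {x : E // x ∈ S}) => a i x.val) B₁ *
      cSq (fun i (x : {x : E // x ∉ S}) => b i x.val) B₂ := by
  classical
  set B : Finset E :=
    B₁.map (Function.Embedding.subtype _) ∪ B₂.map (Function.Embedding.subtype _) with hB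
  have hmem₁ : ∀ y : {x // x ∈ B₁}, ((y : {x : E // x ∈ S}) : E) ∈ B := fun y =>
    Finset.mem_union_left _ (Finset.mem_map_of_mem _ y.2)
  have hmem₂ : ∀ y : {x // x ∈ B₂}, ((y : {x : E // x ∉ S}) : E) ∈ B := fun y =>
    Finset.mem_union_right _ (Finset.mem_map_of_mem _ y.2)
  let φ : ({x // x ∈ B₁} ⊕ {x // x ∈ B₂}) → {x : E // x ∈ B} :=
    Sum.elim (fun y => ⟨(y : {x : E // x ∈ S}), hmem₁ y⟩)
      (fun y => ⟨(y : {x : E // x ∉ S}), hmem₂ y⟩)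
  have hφbij : Function.Bijective φ := by
    constructor
    · rintro (y | y) (z | z) hyz <;>
        simp only [φ, Sum.elim_inl, Sum.elim_inr, Subtype.mk.injEq] at hyz
      · exact congrArg Sum.inl (Subtype.ext (Subtype.ext hyz))
      · exact absurd ((z : {x : E // x ∉ S}).2) (fun hz => hz (hyz ▸ (y : {x : E // x ∈ S}).2))
      · exact absurd ((y : {x : E // x ∉ S}).2) (fun hy => hy (hyz ▸ (z : {x : E // x ∈ S}).2))
      · exact congrArg Sum.inr (Subtype.ext (Subtype.ext hyz))
    · rintro ⟨x, hx⟩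
      rcases Finset.mem_union.mp hx with hx1 | hx1
      · rcases Finset.mem_map.mp hx1 with ⟨y, hy, hyx⟩
        exact ⟨Sum.inl ⟨y, hy⟩, Subtype.ext hyx⟩
      · rcases Finset.mem_map.mp hx1 with ⟨y, hy, hyx⟩
        exact ⟨Sum.inr ⟨y, hy⟩, Subtype.ext hyx⟩
  let Φ : ({x // x ∈ B₁} ⊕ {x // x ∈ B₂}) ≃ {x : E // x ∈ B} := Equiv.ofBijective φ hφbij
  let e₁ : Fin m ≃ {x // x ∈ B₁} := (Finset.equivFinOfCardEq h₁).symm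
  let e₂ : Fin n ≃ {x // x ∈ B₂} := (Finset.equivFinOfCardEq h₂).symm
  let eB : Fin (m + n) ≃ {x : E // x ∈ B} :=
    (finSumFinEquiv.symm.trans ((e₁.sumCongr e₂).trans Φ))
  rw [cSq_eq (Fin.append a b) B (Equiv.refl _) eB,
    cSq_eq (fun i (x : {x : E // x ∈ S}) => a i x.val) B₁ (Equiv.refl _) e₁,
    cSq_eq (fun i (x : {x : E // x ∉ S}) => b i x.val) B₂ (Equiv.refl _) e₂,
    ← mul_pow]
  simp only [Equiv.refl_apply]
  set A : Matrix (Fin m) (Fin m) K :=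
    Matrix.of fun i j => a i (((e₁ j : {x // x ∈ B₁}) : {x : E // x ∈ S}) : E) with hA
  set D : Matrix (Fin n) (Fin n) K :=
    Matrix.of fun i j => b i (((e₂ j : {x // x ∈ B₂}) : {x : E // x ∉ S}) : E) with hD
  have key : ∀ N : Matrix (Fin m ⊕ Fin n) (Fin m ⊕ Fin n) K,
      (∀ i' j', N (Sum.inl i') (Sum.inl j') = A i' j') →
      (∀ i' j', N (Sum.inl i') (Sum.inr j') =
        a i' (((e₂ j' : {x // x ∈ B₂}) : {x : E // x ∉ S}) : E)) →
      (∀ i' j', N (Sum.inr i') (Sum.inl j') =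
        b i' (((e₁ j' : {x // x ∈ B₁}) : {x : E // x ∈ S}) : E)) →
      (∀ i' j', N (Sum.inr i') (Sum.inr j') = D i' j') →
      (Matrix.of fun i j : Fin (m + n) => Fin.append a b i ((eB j : E))) =
        N.submatrix finSumFinEquiv.symm finSumFinEquiv.symm := by
    intro N hN1 hN2 hN3 hN4
    ext i j
    have hi : i = finSumFinEquiv (finSumFinEquiv.symm i) := (Equiv.apply_symm_apply _ _).symm
    have hj2 : (eB j : E) = (φ ((e₁.sumCongr e₂) (finSumFinEquiv.symm j)) : E) := rfl
    rcases hsi : finSumFinEquiv.symm i with i' | i' <;>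
      rcases hsj : finSumFinEquiv.symm j with j' | j' <;>
      rw [Matrix.submatrix_apply, hsi, hsj] <;>
      rw [Matrix.of_apply, hi, hsi, hj2, hsj] <;>
      simp only [finSumFinEquiv_apply_left, finSumFinEquiv_apply_right,
        Fin.append_left, Fin.append_right, Equiv.sumCongr_apply, Sum.map_inl, Sum.map_inr,
        Sum.elim_inl, Sum.elim_inr, φ]
    · rw [hN1]; rfl
    · rw [hN2]
    · rw [hN3]
    · rw [hN4]; rfl
  rcases hzero with ha | hb
  · have hblocks := key (Matrix.fromBlocks A 0
      (Matrix.of fun i' j' => b i' (((e₁ j' : {x // x ∈ B₁}) : {x : E // x ∈ S}) : E)) D)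
      (fun _ _ => rfl)
      (fun i' j' => (ha i' _ ((e₂ j' : {x // x ∈ B₂}) : {x : E // x ∉ S}).2).symm)
      (fun _ _ => rfl) (fun _ _ => rfl)
    rw [hblocks, Matrix.det_submatrix_equiv_self, Matrix.det_fromBlocks_zero₁₂]
  · have hblocks := key (Matrix.fromBlocks A
      (Matrix.of fun i' j' => a i' (((e₂ j' : {x // x ∈ B₂}) : {x : E // x ∉ S}) : E)) 0 D)
      (fun _ _ => rfl) (fun _ _ => rfl)
      (fun i' j' => (hb i' _ ((e₁ j' : {x // x ∈ B₁}) : {x : E // x ∈ S}).2).symm)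
      (fun _ _ => rfl)
    rw [hblocks, Matrix.det_submatrix_equiv_self, Matrix.det_fromBlocks_zero₂₁]

variable {S : Finset E}

lemma card_subtype_eq (s : Finset E) (p : E → Prop) [DecidablePred p] :
    (s.subtype p).card = (s.filter p).card := by
  rw [← Finset.subtype_map p, Finset.card_map]

lemma subtype_union_map_mem (B₁ : Finset {x : E // x ∈ S}) (B₂ : Finset {x : E // x ∉ S}) :
    (B₁.map (Function.Embedding.subtype _) ∪
      B₂.map (Function.Embedding.subtype _)).subtype (· ∈ S) = B₁ := by
  ext x
  simp only [Finset.mem_subtype, Finset.mem_union, Finset.mem_map,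
    Function.Embedding.coe_subtype]
  constructor
  · rintro (⟨y, hy, hyx⟩ | ⟨y, hy, hyx⟩)
    · rwa [← Subtype.ext hyx]
    · exact absurd (hyx ▸ x.2) y.2
  · intro hx
    exact Or.inl ⟨x, hx, rfl⟩

lemma subtype_union_map_not_mem (B₁ : Finset {x : E // x ∈ S}) (B₂ : Finset {x : E // x ∉ S}) :
    (B₁.map (Function.Embedding.subtype _) ∪
      B₂.map (Function.Embedding.subtype _)).subtype (fun x => x ∉ S) = B₂ := by
  ext x
  simp only [Finset.mem_subtype, Finset.mem_union, Finset.mem_map,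
    Function.Embedding.coe_subtype]
  constructor
  · rintro (⟨y, hy, hyx⟩ | ⟨y, hy, hyx⟩)
    · exact absurd (hyx ▸ y.2) x.2
    · rwa [← Subtype.ext hyx]
  · intro hx
    exact Or.inr ⟨x, hx, rfl⟩

lemma disjoint_map_subtype (B₁ : Finset {x : E // x ∈ S}) (B₂ : Finset {x : E // x ∉ S}) :
    Disjoint (B₁.map (Function.Embedding.subtype _))
      (B₂.map (Function.Embedding.subtype _)) := by
  rw [Finset.disjoint_left]
  rintro x hx1 hx2
  rcases Finset.mem_map.mp hx1 with ⟨y, _, hyx⟩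
  rcases Finset.mem_map.mp hx2 with ⟨z, _, hzx⟩
  exact z.2 (by
    have : (y : E) ∈ S := y.2
    rw [show ((y : {x : E // x ∈ S}) : E) = x from hyx] at this
    rwa [show ((z : {x : E // x ∉ S}) : E) = x from hzx])

lemma inter_union_map (B₁ : Finset {x : E // x ∈ S}) (B₂ : Finset {x : E // x ∉ S}) :
    (B₁.map (Function.Embedding.subtype _) ∪
      B₂.map (Function.Embedding.subtype _)) ∩ S = B₁.map (Function.Embedding.subtype _) := by
  rw [← Finset.filter_mem_eq_inter, Finset.filter_union,
    Finset.filter_true_of_mem (fun x hx => by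
      rcases Finset.mem_map.mp hx with ⟨y, _, hyx⟩; exact hyx ▸ y.2),
    Finset.filter_false_of_mem (fun x hx => by
      rcases Finset.mem_map.mp hx with ⟨y, _, hyx⟩; exact hyx ▸ y.2),
    Finset.union_empty]

lemma psi_split (S : Finset E) {p q : ℕ} (u : Fin p → E → K) (v : Fin q → E → K) (z : E → K)
    (hu : ∀ i e, e ∉ S → u i e = 0) (hv : ∀ i e, e ∈ S → v i e = 0) :
    psi (Fin.append (Fin.append u ![z]) v) =
      MvPolynomial.rename Subtype.val (psi (fun i (x : {x : E // x ∉ S}) => v i x.val)) *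
        MvPolynomial.rename Subtype.val
          (psi (fun i (x : {x : E // x ∈ S}) => Fin.append u ![z] i x.val)) +
      MvPolynomial.rename Subtype.val (psi (fun i (x : {x : E // x ∈ S}) => u i x.val)) *
        MvPolynomial.rename Subtype.val
          (psi (fun i (x : {x : E // x ∉ S}) => Fin.append ![z] v i x.val)) := by
  classical
  set w' := Fin.append (Fin.append u ![z]) v with hw'
  -- vanishing of `cSq` outside the two shapes
  have hzero : ∀ B ∈ Finset.univ.powersetCard (p+1+q),
      (B ∩ S).card ≠ p+1 → (B ∩ S).card ≠ p → cSq w' B = 0 := by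
    intro B hB hne1 hne2
    rw [Finset.mem_powersetCard_univ] at hB
    have hsplit : (B ∩ S).card + (B \ S).card = B.card := Finset.card_inter_add_card_sdiff B S
    rcases lt_or_gt_of_ne hne2 with hlt | hgt
    · -- fewer than p columns in S : the u-rows are supported there
      refine cSq_eq_zero_small w' B
        ((Finset.univ : Finset (Fin p)).map
          ⟨fun i => Fin.castAdd q (Fin.castAdd 1 i), fun a b hab => by
            simpa using hab⟩) (B ∩ S) ?_ ?_
      · simpa using hlt
      · rintro i hi e heB heT
        rcases Finset.mem_map.mp hi with ⟨i', _, rfl⟩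
        show w' (Fin.castAdd q (Fin.castAdd 1 i')) e = 0
        rw [hw', Fin.append_left, Fin.append_left]
        exact hu i' e (fun heS => heT (Finset.mem_inter.mpr ⟨heB, heS⟩))
    · -- more than p+1 columns in S : the v-rows are supported outside S
      refine cSq_eq_zero_small w' B
        ((Finset.univ : Finset (Fin q)).map
          ⟨fun j => Fin.natAdd (p+1) j, fun a b hab => by
            have h' : (Fin.natAdd (p+1) a).val = (Fin.natAdd (p+1) b).val :=
              congrArg Fin.val hab
            have h'' : p + 1 + a.val = p + 1 + b.val := h'
            exact Fin.ext (by omega)⟩) (B \ S) ?_ ?_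
      · have : (B ∩ S).card ≥ p + 2 := by omega
        simp only [Finset.card_map, Finset.card_univ, Fintype.card_fin]
        omega
      · rintro i hi e heB heT
        rcases Finset.mem_map.mp hi with ⟨j', _, rfl⟩
        show w' (Fin.natAdd (p+1) j') e = 0
        rw [hw', Fin.append_right]
        refine hv j' e ?_
        by_contra heS
        exact heT (Finset.mem_sdiff.mpr ⟨heB, heS⟩)
  have hpoint : ∀ B ∈ Finset.univ.powersetCard (p+1+q),
      MvPolynomial.C (cSq w' B) * ∏ e ∈ B, MvPolynomial.X e =
      (if (B ∩ S).card = p+1 then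
        MvPolynomial.C (cSq w' B) * ∏ e ∈ B, MvPolynomial.X e else 0) +
      (if (B ∩ S).card = p then
        MvPolynomial.C (cSq w' B) * ∏ e ∈ B, MvPolynomial.X e else 0) := by
    intro B hB
    by_cases h1 : (B ∩ S).card = p+1
    · rw [if_pos h1, if_neg (by omega), add_zero]
    · by_cases h2 : (B ∩ S).card = p
      · rw [if_pos h2, if_neg h1, zero_add]
      · rw [if_neg h1, if_neg h2, add_zero, hzero B hB h1 h2, map_zero, zero_mul]
  rw [psi, Finset.sum_congr rfl hpoint, Finset.sum_add_distrib,
    ← Finset.sum_filter, ← Finset.sum_filter]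
  congr 1
  · -- first shape : p+1 columns in S
    rw [psi, psi, map_sum, map_sum, Finset.sum_mul_sum, ← Finset.sum_product']
    refine Finset.sum_nbij'
      (fun B => (B.subtype (fun x => x ∉ S), B.subtype (· ∈ S)))
      (fun pr => pr.2.map (Function.Embedding.subtype _) ∪
        pr.1.map (Function.Embedding.subtype _)) ?_ ?_ ?_ ?_ ?_
    · intro B hB
      simp only [Finset.mem_filter, Finset.mem_powersetCard_univ] at hB
      obtain ⟨hcard, hk⟩ := hB
      have hsplit := Finset.card_filter_add_card_filter_not
        (s := B) (p := (· ∈ S))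
      rw [Finset.mem_product, Finset.mem_powersetCard_univ, Finset.mem_powersetCard_univ]
      constructor
      · rw [card_subtype_eq]
        have : (B.filter (· ∈ S)).card = (B ∩ S).card := by
          rw [Finset.filter_mem_eq_inter]
        omega
      · rw [card_subtype_eq, Finset.filter_mem_eq_inter, hk]
    · intro pr hpr
      rw [Finset.mem_product, Finset.mem_powersetCard_univ,
        Finset.mem_powersetCard_univ] at hpr
      simp only [Finset.mem_filter, Finset.mem_powersetCard_univ]
      have hdisj := disjoint_map_subtype pr.2 pr.1
      constructor
      · rw [Finset.card_union_of_disjoint hdisj, Finset.card_map, Finset.card_map,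
          hpr.1, hpr.2]
      · rw [inter_union_map, Finset.card_map, hpr.2]
    · intro B hB
      simp only
      rw [Finset.subtype_map, Finset.subtype_map, Finset.filter_union_filter_not_eq]
    · intro pr hpr
      rw [subtype_union_map_mem, subtype_union_map_not_mem]
    · intro B hB
      simp only [Finset.mem_filter, Finset.mem_powersetCard_univ] at hB
      obtain ⟨hcard, hk⟩ := hB
      -- value match
      set B₁ := B.subtype (· ∈ S) with hB₁
      set B₂ := B.subtype (fun x => x ∉ S) with hB₂
      have hB₁card : B₁.card = p + 1 := by
        rw [hB₁, card_subtype_eq, Finset.filter_mem_eq_inter, hk]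
      have hB₂card : B₂.card = q := by
        have hsplit := Finset.card_filter_add_card_filter_not
          (s := B) (p := (· ∈ S))
        have : (B.filter (· ∈ S)).card = (B ∩ S).card := by
          rw [Finset.filter_mem_eq_inter]
        rw [hB₂, card_subtype_eq]
        omega
      have hBeq : B = B₁.map (Function.Embedding.subtype _) ∪
          B₂.map (Function.Embedding.subtype _) := by
        rw [hB₁, hB₂, Finset.subtype_map, Finset.subtype_map,
          Finset.filter_union_filter_not_eq]
      rw [map_mul, map_mul, MvPolynomial.rename_C, MvPolynomial.rename_C]
      rw [show (MvPolynomial.rename Subtype.val) (∏ e ∈ B₂, MvPolynomial.X e) =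
          ∏ e ∈ B₂, (MvPolynomial.X (e : E) : MvPolynomial E K) from by rw [map_prod]; simp,
        show (MvPolynomial.rename Subtype.val) (∏ e ∈ B₁, MvPolynomial.X e) =
          ∏ e ∈ B₁, (MvPolynomial.X (e : E) : MvPolynomial E K) from by rw [map_prod]; simp]
      have hcSq : cSq w' B =
          cSq (fun i (x : {x : E // x ∈ S}) => Fin.append u ![z] i x.val) B₁ *
          cSq (fun i (x : {x : E // x ∉ S}) => v i x.val) B₂ := by
        rw [hBeq, hw']
        exact cSq_append (Fin.append u ![z]) v (Or.inr hv) B₁ B₂ hB₁card hB₂card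
      have hprod : ∏ e ∈ B, MvPolynomial.X e =
          (∏ e ∈ B₁, (MvPolynomial.X (e : E) : MvPolynomial E K)) * ∏ e ∈ B₂, (MvPolynomial.X (e : E) : MvPolynomial E K) := by
        rw [hBeq, Finset.prod_union (disjoint_map_subtype B₁ B₂),
          Finset.prod_map, Finset.prod_map]
        rfl
      rw [hcSq, hprod, map_mul]
      ring
  · -- second shape : p columns in S
    have hw'2 : ∀ B : Finset E, cSq w' B = cSq (Fin.append u (Fin.append ![z] v)) B := by
      intro B
      rw [hw', Fin.append_assoc]
      exact cSq_comp_cast (Nat.add_assoc p 1 q) _ B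
    rw [psi, psi, map_sum, map_sum, Finset.sum_mul_sum, ← Finset.sum_product']
    refine Finset.sum_nbij'
      (fun B => (B.subtype (· ∈ S), B.subtype (fun x => x ∉ S)))
      (fun pr => pr.1.map (Function.Embedding.subtype _) ∪
        pr.2.map (Function.Embedding.subtype _)) ?_ ?_ ?_ ?_ ?_
    · intro B hB
      simp only [Finset.mem_filter, Finset.mem_powersetCard_univ] at hB
      obtain ⟨hcard, hk⟩ := hB
      have hsplit := Finset.card_filter_add_card_filter_not
        (s := B) (p := (· ∈ S))
      have : (B.filter (· ∈ S)).card = (B ∩ S).card := by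
        rw [Finset.filter_mem_eq_inter]
      rw [Finset.mem_product, Finset.mem_powersetCard_univ, Finset.mem_powersetCard_univ]
      constructor
      · rw [card_subtype_eq, Finset.filter_mem_eq_inter, hk]
      · rw [card_subtype_eq]
        omega
    · intro pr hpr
      rw [Finset.mem_product, Finset.mem_powersetCard_univ,
        Finset.mem_powersetCard_univ] at hpr
      simp only [Finset.mem_filter, Finset.mem_powersetCard_univ]
      have hdisj := disjoint_map_subtype pr.1 pr.2
      constructor
      · rw [Finset.card_union_of_disjoint hdisj, Finset.card_map, Finset.card_map,
          hpr.1, hpr.2]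
        omega
      · rw [inter_union_map, Finset.card_map, hpr.1]
    · intro B hB
      simp only
      rw [Finset.subtype_map, Finset.subtype_map, Finset.filter_union_filter_not_eq]
    · intro pr hpr
      rw [subtype_union_map_mem, subtype_union_map_not_mem]
    · intro B hB
      simp only [Finset.mem_filter, Finset.mem_powersetCard_univ] at hB
      obtain ⟨hcard, hk⟩ := hB
      set B₁ := B.subtype (· ∈ S) with hB₁
      set B₂ := B.subtype (fun x => x ∉ S) with hB₂
      have hB₁card : B₁.card = p := by
        rw [hB₁, card_subtype_eq, Finset.filter_mem_eq_inter, hk]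
      have hB₂card : B₂.card = 1 + q := by
        have hsplit := Finset.card_filter_add_card_filter_not
          (s := B) (p := (· ∈ S))
        have : (B.filter (· ∈ S)).card = (B ∩ S).card := by
          rw [Finset.filter_mem_eq_inter]
        rw [hB₂, card_subtype_eq]
        omega
      have hBeq : B = B₁.map (Function.Embedding.subtype _) ∪
          B₂.map (Function.Embedding.subtype _) := by
        rw [hB₁, hB₂, Finset.subtype_map, Finset.subtype_map,
          Finset.filter_union_filter_not_eq]
      rw [map_mul, map_mul, MvPolynomial.rename_C, MvPolynomial.rename_C]
      rw [show (MvPolynomial.rename Subtype.val) (∏ e ∈ B₂, MvPolynomial.X e) =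
          ∏ e ∈ B₂, (MvPolynomial.X (e : E) : MvPolynomial E K) from by rw [map_prod]; simp,
        show (MvPolynomial.rename Subtype.val) (∏ e ∈ B₁, MvPolynomial.X e) =
          ∏ e ∈ B₁, (MvPolynomial.X (e : E) : MvPolynomial E K) from by rw [map_prod]; simp]
      have hcSq : cSq w' B =
          cSq (fun i (x : {x : E // x ∈ S}) => u i x.val) B₁ *
          cSq (fun i (x : {x : E // x ∉ S}) => Fin.append ![z] v i x.val) B₂ := by
        rw [hw'2, hBeq]
        exact cSq_append u (Fin.append ![z] v) (Or.inl hu) B₁ B₂ hB₁card hB₂card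
      have hprod : ∏ e ∈ B, MvPolynomial.X e =
          (∏ e ∈ B₁, (MvPolynomial.X (e : E) : MvPolynomial E K)) * ∏ e ∈ B₂, (MvPolynomial.X (e : E) : MvPolynomial E K) := by
        rw [hBeq, Finset.prod_union (disjoint_map_subtype B₁ B₂),
          Finset.prod_map, Finset.prod_map]
        rfl
      rw [hcSq, hprod, map_mul]
      ring


section LinearAlgebra

/-- The projection onto coordinates in `F`. -/
noncomputable def projMem (F : Finset E) : (E → K) →ₗ[K] ({x : E // x ∈ F} → K) :=
  LinearMap.funLeft K K (fun e : {x : E // x ∈ F} => (e : E))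

/-- The projection onto coordinates outside `F`. -/
noncomputable def projNot (F : Finset E) : (E → K) →ₗ[K] ({x : E // x ∉ F} → K) :=
  LinearMap.funLeft K K (fun e : {x : E // x ∉ F} => (e : E))

lemma coordFun_apply (W : Submodule K (E → K)) (e : E) (x : W) :
    coordFun W e x = (x : E → K) e := rfl

lemma finrank_map_of_inj (p : Submodule K (E → K)) {N : Type} [AddCommGroup N] [Module K N]
    (f : (E → K) →ₗ[K] N) (h : ∀ x ∈ p, f x = 0 → x = 0) :
    Module.finrank K (p.map f) = Module.finrank K p := by
  classical
  let g := f.comp p.subtype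
  have hrange : LinearMap.range g = p.map f := by
    rw [LinearMap.range_comp, Submodule.range_subtype]
  have hker : LinearMap.ker g = ⊥ := by
    rw [eq_bot_iff]
    rintro ⟨x, hx⟩ hgx
    have : f x = 0 := hgx
    simpa [Submodule.mk_eq_zero] using h x hx this
  have hh := LinearMap.finrank_range_add_finrank_ker g
  rw [hrange, hker] at hh
  simpa using hh

lemma finrank_restrict_add (W : Submodule K (E → K)) (F : Finset E) :
    Module.finrank K (W.map (projMem F)) +
      Module.finrank K (W ⊓ LinearMap.ker (projMem F) : Submodule K (E → K)) =
      Module.finrank K W := by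
  classical
  let f := (projMem F).comp W.subtype
  have hrange : LinearMap.range f = W.map (projMem F) := by
    rw [LinearMap.range_comp, Submodule.range_subtype]
  have hker : LinearMap.ker f =
      Submodule.comap W.subtype (W ⊓ LinearMap.ker (projMem F)) := by
    ext x
    simp [f, LinearMap.mem_ker, Submodule.mem_comap, x.2]
  have h := LinearMap.finrank_range_add_finrank_ker f
  rw [hrange, hker] at h
  have hEq : Module.finrank K
      (Submodule.comap W.subtype (W ⊓ LinearMap.ker (projMem F))) =
      Module.finrank K (W ⊓ LinearMap.ker (projMem F) : Submodule K (E → K)) :=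
    LinearEquiv.finrank_eq (Submodule.comapSubtypeEquivOfLe (inf_le_left :
      W ⊓ LinearMap.ker (projMem F) ≤ W))
  rw [hEq] at h
  exact h

lemma finrank_contract (W : Submodule K (E → K)) (F : Finset E) :
    Module.finrank K (contractConfig W F) =
      Module.finrank K (W ⊓ LinearMap.ker (projMem F) : Submodule K (E → K)) := by
  refine finrank_map_of_inj _ _ ?_
  rintro x ⟨-, hker⟩ hx
  funext e
  by_cases he : e ∈ F
  · exact congrFun hker ⟨e, he⟩
  · exact congrFun hx ⟨e, he⟩

lemma rkOn_univ (W : Submodule K (E → K)) :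
    rkOn W Finset.univ = Module.finrank K W := by
  refine finrank_map_of_inj _ _ ?_
  intro x _ hx
  funext e
  exact congrFun hx ⟨e, Finset.mem_univ e⟩

lemma disjoint_inf_ker (W : Submodule K (E → K)) (E₁ : Finset E) :
    (W ⊓ LinearMap.ker (projMem E₁ᶜ)) ⊓ (W ⊓ LinearMap.ker (projMem E₁)) = ⊥ := by
  rw [eq_bot_iff]
  rintro x ⟨⟨-, h1⟩, ⟨-, h2⟩⟩
  have : x = 0 := by
    funext e
    by_cases he : e ∈ E₁
    · exact congrFun h2 ⟨e, he⟩
    · exact congrFun h1 ⟨e, Finset.mem_compl.mpr he⟩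
  simp [this]

/-- Connectivity forces `λ ≥ 1` for a proper separation. -/
lemma rk_add_rk_compl_ge (W : Submodule K (E → K)) (E₁ : Finset E)
    (hconn : Connected W) (h1 : E₁.Nonempty) (h2 : E₁ᶜ.Nonempty) :
    Module.finrank K W + 1 ≤ rkOn W E₁ + rkOn W E₁ᶜ := by
  classical
  by_contra hcon
  push_neg at hcon
  set U₁ : Submodule K (E → K) := W ⊓ LinearMap.ker (projMem E₁ᶜ) with hU₁
  set U₂ : Submodule K (E → K) := W ⊓ LinearMap.ker (projMem E₁) with hU₂
  have hA1 : rkOn W E₁ + Module.finrank K U₂ = Module.finrank K W :=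
    finrank_restrict_add W E₁
  have hA2 : rkOn W E₁ᶜ + Module.finrank K U₁ = Module.finrank K W :=
    finrank_restrict_add W E₁ᶜ
  have hsup : Module.finrank K (U₁ ⊔ U₂ : Submodule K (E → K)) =
      Module.finrank K U₁ + Module.finrank K U₂ := by
    have := Submodule.finrank_sup_add_finrank_inf_eq U₁ U₂
    rw [disjoint_inf_ker W E₁] at this
    simpa using this
  have hle : U₁ ⊔ U₂ ≤ W := sup_le inf_le_left inf_le_left
  have hWeq : U₁ ⊔ U₂ = W := by
    refine Submodule.eq_of_le_of_finrank_le hle ?_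
    rw [hsup]; omega
  -- pick elements on both sides and a circuit through them
  obtain ⟨e₀, he₀⟩ := h1
  obtain ⟨f₀, hf₀⟩ := h2
  have hf₀' : f₀ ∉ E₁ := Finset.mem_compl.mp hf₀
  have hne : e₀ ≠ f₀ := fun h => hf₀' (h ▸ he₀)
  obtain ⟨C, hC, heC, hfC⟩ := hconn.2 e₀ f₀ hne
  obtain ⟨g, hgsum, i₀, hgi₀⟩ := Fintype.not_linearIndependent_iff.mp hC.1
  set gE : E → K := fun x => if h : x ∈ C then g ⟨x, h⟩ else 0 with hgEdef
  have hgE : ∀ i : {x : E // x ∈ C}, gE i.val = g i := fun i => by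
    rw [hgEdef]; simp only; rw [dif_pos i.2]
  by_cases hcase : ∀ i : {x : E // x ∈ C}, (i : E) ∈ E₁ → g i = 0
  · -- relation supported outside E₁ : C \ E₁ is dependent, contradicting minimality
    have hss : C \ E₁ ⊂ C := by
      refine Finset.ssubset_iff_of_subset (Finset.sdiff_subset) |>.mpr ?_
      exact ⟨e₀, heC, fun h => (Finset.mem_sdiff.mp h).2 he₀⟩
    have hindep := hC.2 _ hss
    refine Fintype.not_linearIndependent_iff.mpr ?_ hindep
    refine ⟨fun i => gE i.val, ?_, ?_⟩
    · have step1 : ∑ i : {x : E // x ∈ (C \ E₁)}, gE i.val • coordFun W i.val =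
          ∑ x ∈ C \ E₁, gE x • coordFun W x :=
        Finset.sum_coe_sort (C \ E₁) (fun x => gE x • coordFun W x)
      have step2 : ∑ x ∈ C \ E₁, gE x • coordFun W x =
          ∑ x ∈ C, gE x • coordFun W x := by
        refine Finset.sum_subset Finset.sdiff_subset ?_
        intro x hxC hxD
        have hx1 : x ∈ E₁ := by
          by_contra hx1
          exact hxD (Finset.mem_sdiff.mpr ⟨hxC, hx1⟩)
        have : gE x = 0 := by
          rw [hgEdef]; simp only; rw [dif_pos hxC]
          exact hcase ⟨x, hxC⟩ hx1
        rw [this, zero_smul]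
      have step3 : ∑ x ∈ C, gE x • coordFun W x =
          ∑ i : {x : E // x ∈ C}, g i • coordFun W i.val := by
        rw [← Finset.sum_coe_sort C (fun x => gE x • coordFun W x)]
        exact Finset.sum_congr rfl fun i _ => by rw [hgE i]
      rw [step1, step2, step3]
      exact hgsum
    · have hmem : (i₀ : E) ∈ C \ E₁ := by
        refine Finset.mem_sdiff.mpr ⟨i₀.2, fun h => hgi₀ (hcase i₀ h)⟩
      exact ⟨⟨i₀, hmem⟩, by show gE (i₀ : E) ≠ 0; rw [hgE i₀]; exact hgi₀⟩
  · -- some coefficient inside E₁ is nonzero : C ∩ E₁ is dependent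
    push_neg at hcase
    obtain ⟨i₁, hi₁mem, hi₁⟩ := hcase
    have hss : C ∩ E₁ ⊂ C := by
      refine Finset.ssubset_iff_of_subset (Finset.inter_subset_left) |>.mpr ?_
      exact ⟨f₀, hfC, fun h => hf₀' (Finset.mem_inter.mp h).2⟩
    have hindep := hC.2 _ hss
    refine Fintype.not_linearIndependent_iff.mpr ?_ hindep
    refine ⟨fun i => gE i.val, ?_, ?_⟩
    · -- the relation restricted to C ∩ E₁ still vanishes, using the splitting
      apply LinearMap.ext
      rintro ⟨x, hxW⟩
      have hxW' : x ∈ U₁ ⊔ U₂ := by rw [hWeq]; exact hxW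
      obtain ⟨a, ha, b, hb, hab⟩ := Submodule.mem_sup.mp hxW'
      have haW : a ∈ W := ha.1
      have happ : (∑ i : {x : E // x ∈ (C ∩ E₁)}, gE i.val • coordFun W i.val)
          (⟨x, hxW⟩ : W) = ∑ e ∈ C ∩ E₁, gE e * x e := by
        rw [LinearMap.sum_apply,
          ← Finset.sum_coe_sort (C ∩ E₁) (fun e => gE e * x e)]
        exact Finset.sum_congr rfl fun i _ => rfl
      rw [happ, LinearMap.zero_apply]
      have hbsum : ∑ e ∈ C ∩ E₁, gE e * b e = 0 := by
        refine Finset.sum_eq_zero fun e he => ?_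
        have : b e = 0 := congrFun hb.2 ⟨e, (Finset.mem_inter.mp he).2⟩
        rw [this, mul_zero]
      have hasum : ∑ e ∈ C ∩ E₁, gE e * a e = 0 := by
        have hfull : ∑ e ∈ C, gE e * a e = 0 := by
          have hz := congrArg (fun (L : W →ₗ[K] K) => L ⟨a, haW⟩) hgsum
          simp only [LinearMap.sum_apply, LinearMap.smul_apply, smul_eq_mul,
            LinearMap.zero_apply] at hz
          rw [← hz, ← Finset.sum_coe_sort C (fun e => gE e * a e)]
          exact Finset.sum_congr rfl fun i _ => by rw [hgE i, coordFun_apply]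
        rw [← hfull]
        refine Finset.sum_subset (Finset.inter_subset_left) ?_
        intro e heC heD
        have he1 : e ∉ E₁ := fun h => heD (Finset.mem_inter.mpr ⟨heC, h⟩)
        have : a e = 0 := congrFun ha.2 ⟨e, Finset.mem_compl.mpr he1⟩
        rw [this, mul_zero]
      calc ∑ e ∈ C ∩ E₁, gE e * x e
          = ∑ e ∈ C ∩ E₁, (gE e * a e + gE e * b e) := by
            refine Finset.sum_congr rfl fun e _ => ?_
            rw [← hab]
            show gE e * (a e + b e) = _
            ring
        _ = (∑ e ∈ C ∩ E₁, gE e * a e) + ∑ e ∈ C ∩ E₁, gE e * b e :=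
            Finset.sum_add_distrib
        _ = 0 := by rw [hasum, hbsum, add_zero]
    · have hmem : (i₁ : E) ∈ C ∩ E₁ := Finset.mem_inter.mpr ⟨i₁.2, hi₁mem⟩
      exact ⟨⟨i₁, hmem⟩, by show gE (i₁ : E) ≠ 0; rw [hgE i₁]; exact hi₁⟩

end LinearAlgebra

/-- Extension by zero of a vector defined on coordinates outside `F`. -/
noncomputable def extZero (F : Finset E) : ({x : E // x ∉ F} → K) →ₗ[K] (E → K) where
  toFun g e := if h : e ∈ F then 0 else g ⟨e, h⟩
  map_add' g h := by funext e; by_cases he : e ∈ F <;> simp [he]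
  map_smul' c g := by funext e; by_cases he : e ∈ F <;> simp [he]

lemma extZero_span (W : Submodule K (E → K)) (F : Finset E) {k : ℕ}
    (c : Fin k → {x : E // x ∉ F} → K)
    (hc : Submodule.span K (Set.range c) = contractConfig W F) :
    Submodule.span K (Set.range (fun i => extZero F (c i))) =
      W ⊓ LinearMap.ker (projMem F) := by
  have hrange : Set.range (fun i => extZero F (c i)) = extZero F '' Set.range c := by
    rw [← Set.range_comp]; rfl
  rw [hrange, Submodule.span_image, hc]
  show Submodule.map (extZero F)
    (Submodule.map (projNot F) (W ⊓ LinearMap.ker (projMem F))) = _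
  rw [← Submodule.map_comp]
  have hid : ∀ x ∈ W ⊓ LinearMap.ker (projMem F),
      ((extZero F).comp (projNot F)) x = x := by
    intro x hx
    funext e
    show (if h : e ∈ F then 0 else x e) = x e
    by_cases he : e ∈ F
    · rw [dif_pos he]
      exact (congrFun hx.2 ⟨e, he⟩).symm
    · rw [dif_neg he]
  ext y
  simp only [Submodule.mem_map]
  constructor
  · rintro ⟨x, hx, rfl⟩
    rw [hid x hx]; exact hx
  · intro hy
    exact ⟨y, hy, hid y hy⟩

lemma range_fin_append {m n : ℕ} {α : Type*} (f : Fin m → α) (g : Fin n → α) :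
    Set.range (Fin.append f g) = Set.range f ∪ Set.range g := by
  ext x
  constructor
  · rintro ⟨i, rfl⟩
    refine Fin.addCases (fun i' => ?_) (fun i' => ?_) i
    · exact Or.inl ⟨i', (Fin.append_left f g i').symm⟩
    · exact Or.inr ⟨i', (Fin.append_right f g i').symm⟩
  · rintro (⟨i, rfl⟩ | ⟨i, rfl⟩)
    · exact ⟨Fin.castAdd n i, Fin.append_left f g i⟩
    · exact ⟨Fin.natAdd m i, Fin.append_right f g i⟩

lemma range_matrix_singleton {α : Type*} (z : α) : Set.range ![z] = {z} := by
  ext x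
  simp only [Set.mem_range, Set.mem_singleton_iff]
  constructor
  · rintro ⟨i, rfl⟩; fin_cases i; rfl
  · rintro rfl; exact ⟨0, rfl⟩

set_option maxHeartbeats 2000000 in
/-- **Theorem (Configuration polynomials and 2-separations).**
Let `W ⊆ K^E` realize a connected matroid and let `E = E₁ ⊔ E₁ᶜ` be a `2`-separation.
Then, up to nonzero square constant factors,
`ψ_W = ψ_{W/E₁} · ψ_{W|_{E₁}} + ψ_{W|_{E₂}} · ψ_{W/E₂}` where `E₂ = E₁ᶜ`. -/
theorem psi_two_separation
    (W : Submodule K (E → K)) (E₁ : Finset E) {r r₁ r₂ r₃ r₄ : ℕ}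
    (w : Fin r → E → K)
    (wres₁ : Fin r₁ → {x : E // x ∈ E₁} → K)
    (wcon₁ : Fin r₂ → {x : E // x ∉ E₁} → K)
    (wres₂ : Fin r₃ → {x : E // x ∈ E₁ᶜ} → K)
    (wcon₂ : Fin r₄ → {x : E // x ∉ E₁ᶜ} → K)
    (hw : IsBasisOf w W)
    (hwres₁ : IsBasisOf wres₁ (restrictConfig W E₁))
    (hwcon₁ : IsBasisOf wcon₁ (contractConfig W E₁))
    (hwres₂ : IsBasisOf wres₂ (restrictConfig W E₁ᶜ))
    (hwcon₂ : IsBasisOf wcon₂ (contractConfig W E₁ᶜ))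
    (hconn : Connected W)
    (hsep : KSep W 2 E₁) :
    ∃ a b : K, a ≠ 0 ∧ b ≠ 0 ∧
      psi w = MvPolynomial.C (a ^ 2) *
            MvPolynomial.rename Subtype.val (psi wcon₁) *
            MvPolynomial.rename Subtype.val (psi wres₁)
        + MvPolynomial.C (b ^ 2) *
            MvPolynomial.rename Subtype.val (psi wres₂) *
            MvPolynomial.rename Subtype.val (psi wcon₂) := by
  classical
  obtain ⟨hsep1, hsepc1, hsepc2⟩ := hsep
  -- dimension bookkeeping
  have hrW : Module.finrank K W = r := by
    rw [← hw.2, finrank_span_eq_card hw.1, Fintype.card_fin]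
  have hr₁ : Module.finrank K (restrictConfig W E₁) = r₁ := by
    rw [← hwres₁.2, finrank_span_eq_card hwres₁.1, Fintype.card_fin]
  have hr₂ : Module.finrank K (contractConfig W E₁) = r₂ := by
    rw [← hwcon₁.2, finrank_span_eq_card hwcon₁.1, Fintype.card_fin]
  have hr₃ : Module.finrank K (restrictConfig W E₁ᶜ) = r₃ := by
    rw [← hwres₂.2, finrank_span_eq_card hwres₂.1, Fintype.card_fin]
  have hr₄ : Module.finrank K (contractConfig W E₁ᶜ) = r₄ := by
    rw [← hwcon₂.2, finrank_span_eq_card hwcon₂.1, Fintype.card_fin]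
  set U₁ : Submodule K (E → K) := W ⊓ LinearMap.ker (projMem E₁ᶜ) with hU₁def
  set U₂ : Submodule K (E → K) := W ⊓ LinearMap.ker (projMem E₁) with hU₂def
  have hU₁rank : Module.finrank K U₁ = r₄ := by
    rw [← hr₄]; exact (finrank_contract W E₁ᶜ).symm
  have hU₂rank : Module.finrank K U₂ = r₂ := by
    rw [← hr₂]; exact (finrank_contract W E₁).symm
  have hA1 : rkOn W E₁ + Module.finrank K U₂ = Module.finrank K W :=
    finrank_restrict_add W E₁
  have hA2 : rkOn W E₁ᶜ + Module.finrank K U₁ = Module.finrank K W :=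
    finrank_restrict_add W E₁ᶜ
  have hrk₁ : rkOn W E₁ = r₁ := hr₁
  have hrk₃ : rkOn W E₁ᶜ = r₃ := hr₃
  have hrkuniv : rkOn W Finset.univ = r := by rw [rkOn_univ, hrW]
  have hE₁ne : E₁.Nonempty := Finset.card_pos.mp (by omega)
  have hE₂ne : E₁ᶜ.Nonempty := Finset.card_pos.mp (by omega)
  have hge := rk_add_rk_compl_ge W E₁ hconn hE₁ne hE₂ne
  rw [hrk₁, hrk₃, hrW] at hge
  rw [hrk₁, hrk₃, hrkuniv] at hsep1
  -- numerology
  have hp : r₁ = r₄ + 1 := by omega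
  have hq : r₃ = 1 + r₂ := by omega
  have hcast : r = r₄ + 1 + r₂ := by omega
  -- the adapted families
  set u : Fin r₄ → E → K := fun i => extZero E₁ᶜ (wcon₂ i) with hudef
  set v : Fin r₂ → E → K := fun i => extZero E₁ (wcon₁ i) with hvdef
  have hspanu : Submodule.span K (Set.range u) = U₁ := extZero_span W E₁ᶜ wcon₂ hwcon₂.2
  have hspanv : Submodule.span K (Set.range v) = U₂ := extZero_span W E₁ wcon₁ hwcon₁.2
  have hu : ∀ i e, e ∉ E₁ → u i e = 0 := fun i e he => by
    show (if h : e ∈ E₁ᶜ then 0 else wcon₂ i ⟨e, h⟩) = 0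
    rw [dif_pos (Finset.mem_compl.mpr he)]
  have hv : ∀ i e, e ∈ E₁ → v i e = 0 := fun i e he => by
    show (if h : e ∈ E₁ then 0 else wcon₁ i ⟨e, h⟩) = 0
    rw [dif_pos he]
  -- the extra vector z
  have hDrank : Module.finrank K (U₁ ⊔ U₂ : Submodule K (E → K)) = r₄ + r₂ := by
    have h := Submodule.finrank_sup_add_finrank_inf_eq U₁ U₂
    rw [disjoint_inf_ker W E₁, finrank_bot K (E → K), add_zero] at h
    rw [h, hU₁rank, hU₂rank]
  have hDle : U₁ ⊔ U₂ ≤ W := sup_le inf_le_left inf_le_left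
  have hDlt : U₁ ⊔ U₂ < W := by
    refine lt_of_le_of_ne hDle (fun h => ?_)
    have := congrArg (fun (p : Submodule K (E → K)) => Module.finrank K p) h
    simp only [hDrank, hrW] at this
    omega
  obtain ⟨z, hzW, hzD⟩ := SetLike.exists_of_lt hDlt
  have hz0 : z ≠ 0 := fun h => hzD (h ▸ (U₁ ⊔ U₂).zero_mem)
  -- the adapted basis of W
  set w' : Fin (r₄ + 1 + r₂) → E → K := Fin.append (Fin.append u ![z]) v with hw'def
  have hWsplit : (U₁ ⊔ Submodule.span K {z}) ⊔ U₂ = W := by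
    rw [sup_right_comm]
    refine Submodule.eq_of_le_of_finrank_le
      (sup_le hDle (by rwa [Submodule.span_singleton_le_iff_mem])) ?_
    have hinf : (U₁ ⊔ U₂) ⊓ Submodule.span K {z} = ⊥ :=
      disjoint_iff.mp ((Submodule.disjoint_span_singleton' hz0).mpr hzD)
    have h := Submodule.finrank_sup_add_finrank_inf_eq (U₁ ⊔ U₂) (Submodule.span K {z})
    rw [hinf, finrank_bot K (E → K), add_zero] at h
    rw [hrW, h, hDrank, finrank_span_singleton hz0]
    omega
  have hspanw' : Submodule.span K (Set.range w') = W := by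
    rw [hw'def, range_fin_append, range_fin_append, range_matrix_singleton,
      Submodule.span_union, Submodule.span_union, hspanu, hspanv]
    exact hWsplit
  have hindw' : LinearIndependent K w' := by
    rw [linearIndependent_iff_card_eq_finrank_span]
    rw [Set.finrank, hspanw', hrW, Fintype.card_fin]
    omega
  -- compare `w` with the adapted basis
  set w'' : Fin r → E → K := fun i => w' (Fin.cast hcast i) with hw''def
  have hw''eq : w'' = w' ∘ ⇑(finCongr hcast) := rfl
  have hindw'' : LinearIndependent K w'' := by
    rw [hw''eq]
    exact (linearIndependent_equiv (finCongr hcast)).mpr hindw'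
  have hrangew'' : Set.range w'' = Set.range w' := by
    rw [hw''eq, Set.range_comp, Equiv.range_eq_univ, Set.image_univ]
  obtain ⟨d₀, hd₀, hpsi₀⟩ := psi_eq_of_span hw.1 hindw''
    (by rw [hrangew'', hspanw', hw.2])
  have hpsi₀' : psi w' = MvPolynomial.C (d₀ ^ 2) * psi w := by
    rw [← hpsi₀, hw''def, psi_comp_cast hcast w']
  -- the restriction family on E₁
  set f₁ : Fin (r₄ + 1) → {x : E // x ∈ E₁} → K :=
    (fun i (x : {x : E // x ∈ E₁}) => Fin.append u ![z] i x.val) with hf₁def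
  have hf₁proj : f₁ = fun i => projMem E₁ (Fin.append u ![z] i) := rfl
  have hmapU₂ : Submodule.map (projMem E₁) U₂ = ⊥ := by
    rw [eq_bot_iff]
    rintro y ⟨x, hx, rfl⟩
    exact hx.2
  have hspanf₁ : Submodule.span K (Set.range f₁) = restrictConfig W E₁ := by
    rw [hf₁proj]
    have : Set.range (fun i => projMem E₁ (Fin.append u ![z] i)) =
        projMem E₁ '' Set.range (Fin.append u ![z]) := by
      rw [← Set.range_comp]; rfl
    rw [this, Submodule.span_image, range_fin_append, range_matrix_singleton,
      Submodule.span_union, hspanu]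
    show Submodule.map (projMem E₁) _ = Submodule.map (projMem E₁) W
    conv_rhs => rw [← hWsplit, Submodule.map_sup, hmapU₂, sup_bot_eq]
  have hindf₁ : LinearIndependent K f₁ := by
    rw [linearIndependent_iff_card_eq_finrank_span]
    rw [Set.finrank, hspanf₁, hr₁, Fintype.card_fin]
    omega
  set f₁'' : Fin r₁ → {x : E // x ∈ E₁} → K := fun i => f₁ (Fin.cast hp i) with hf₁''def
  have hindf₁'' : LinearIndependent K f₁'' :=
    (linearIndependent_equiv (finCongr hp)).mpr hindf₁
  obtain ⟨d₁, hd₁, hpsi₁⟩ := psi_eq_of_span hwres₁.1 hindf₁''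
    (by
      have : Set.range f₁'' = Set.range f₁ := by
        rw [show f₁'' = f₁ ∘ ⇑(finCongr hp) from rfl, Set.range_comp,
          Equiv.range_eq_univ, Set.image_univ]
      rw [this, hspanf₁, hwres₁.2])
  have hpsi₁' : psi f₁ = MvPolynomial.C (d₁ ^ 2) * psi wres₁ := by
    rw [← hpsi₁, hf₁''def, psi_comp_cast hp f₁]
  -- the deletion family on E₁ᶜ (transported to `{x // x ∉ E₁}`)
  set f₂ : Fin (1 + r₂) → {x : E // x ∉ E₁} → K :=
    (fun i (x : {x : E // x ∉ E₁}) => Fin.append ![z] v i x.val) with hf₂def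
  have hf₂proj : f₂ = fun i => projNot E₁ (Fin.append ![z] v i) := rfl
  have hmapU₁ : Submodule.map (projNot E₁) U₁ = ⊥ := by
    rw [eq_bot_iff]
    rintro y ⟨x, hx, rfl⟩
    rw [Submodule.mem_bot]
    funext s
    exact congrFun hx.2 ⟨s.val, Finset.mem_compl.mpr s.2⟩
  have hspanf₂ : Submodule.span K (Set.range f₂) = Submodule.map (projNot E₁) W := by
    rw [hf₂proj]
    have : Set.range (fun i => projNot E₁ (Fin.append ![z] v i)) =
        projNot E₁ '' Set.range (Fin.append ![z] v) := by
      rw [← Set.range_comp]; rfl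
    rw [this, Submodule.span_image, range_fin_append, range_matrix_singleton,
      Submodule.span_union, hspanv]
    conv_rhs => rw [← hWsplit, Submodule.map_sup, Submodule.map_sup, hmapU₁,
      bot_sup_eq, ← Submodule.map_sup]
  -- transport wres₂
  set σ : {x : E // x ∉ E₁} ≃ {x : E // x ∈ E₁ᶜ} :=
    Equiv.subtypeEquivRight (fun x => (Finset.mem_compl).symm) with hσdef
  set wres₂' : Fin r₃ → {x : E // x ∉ E₁} → K := fun i x => wres₂ i (σ x) with hwres₂'def
  have hσlin : wres₂' = fun i => (LinearMap.funLeft K K ⇑σ) (wres₂ i) := rfl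
  have hindwres₂' : LinearIndependent K wres₂' := by
    rw [hσlin]
    refine hwres₂.1.map' (LinearMap.funLeft K K ⇑σ) ?_
    rw [eq_bot_iff]
    intro g hg
    have : g ∘ ⇑σ = 0 := hg
    rw [Submodule.mem_bot]
    funext x
    have := congrFun this (σ.symm x)
    simpa using this
  have hspanwres₂' : Submodule.span K (Set.range wres₂') =
      Submodule.map (projNot E₁) W := by
    rw [hσlin]
    have : Set.range (fun i => (LinearMap.funLeft K K ⇑σ) (wres₂ i)) =
        (LinearMap.funLeft K K ⇑σ) '' Set.range wres₂ := by
      rw [← Set.range_comp]; rfl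
    rw [this, Submodule.span_image, hwres₂.2]
    show Submodule.map _ (Submodule.map (projMem E₁ᶜ) W) = _
    rw [← Submodule.map_comp]
    congr 1
  have hindf₂ : LinearIndependent K f₂ := by
    rw [linearIndependent_iff_card_eq_finrank_span]
    rw [Set.finrank, hspanf₂, ← hspanwres₂', finrank_span_eq_card hindwres₂',
      Fintype.card_fin, Fintype.card_fin]
    omega
  set f₂'' : Fin r₃ → {x : E // x ∉ E₁} → K := fun i => f₂ (Fin.cast hq i) with hf₂''def
  have hindf₂'' : LinearIndependent K f₂'' :=
    (linearIndependent_equiv (finCongr hq)).mpr hindf₂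
  obtain ⟨d₂, hd₂, hpsi₂⟩ := psi_eq_of_span hindwres₂' hindf₂''
    (by
      have : Set.range f₂'' = Set.range f₂ := by
        rw [show f₂'' = f₂ ∘ ⇑(finCongr hq) from rfl, Set.range_comp,
          Equiv.range_eq_univ, Set.image_univ]
      rw [this, hspanf₂, hspanwres₂'])
  have hpsi₂' : psi f₂ = MvPolynomial.C (d₂ ^ 2) * psi wres₂' := by
    rw [← hpsi₂, hf₂''def, psi_comp_cast hq f₂]
  -- identification of the contraction families
  have hvS : (fun i (x : {x : E // x ∉ E₁}) => v i x.val) = wcon₁ := by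
    funext i x
    show (if h : x.val ∈ E₁ then 0 else wcon₁ i ⟨x.val, h⟩) = wcon₁ i x
    rw [dif_neg x.2]
  set τ : {x : E // x ∈ E₁} ≃ {x : E // x ∉ E₁ᶜ} :=
    Equiv.subtypeEquivRight (fun x => by simp) with hτdef
  have huS : (fun i (x : {x : E // x ∈ E₁}) => u i x.val) =
      fun i x => wcon₂ i (τ x) := by
    funext i x
    show (if h : x.val ∈ E₁ᶜ then 0 else wcon₂ i ⟨x.val, h⟩) = wcon₂ i (τ x)
    rw [dif_neg (fun h => (Finset.mem_compl.mp h) x.2)]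
    rfl
  have hrenuS : MvPolynomial.rename (Subtype.val : {x : E // x ∈ E₁} → E)
      (psi (fun i x => wcon₂ i (τ x))) =
      MvPolynomial.rename Subtype.val (psi wcon₂) := by
    rw [← psi_comp_equiv τ wcon₂, MvPolynomial.rename_rename]
    have : (Subtype.val : {x : E // x ∉ E₁ᶜ} → E) ∘ ⇑τ =
        (Subtype.val : {x : E // x ∈ E₁} → E) := funext fun x => rfl
    rw [this]
  have hrenwres₂ : MvPolynomial.rename (Subtype.val : {x : E // x ∉ E₁} → E)
      (psi wres₂') = MvPolynomial.rename Subtype.val (psi wres₂) := by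
    rw [← psi_comp_equiv σ wres₂, MvPolynomial.rename_rename]
    have : (Subtype.val : {x : E // x ∈ E₁ᶜ} → E) ∘ ⇑σ =
        (Subtype.val : {x : E // x ∉ E₁} → E) := funext fun x => rfl
    rw [this]
  -- the splitting identity
  have hsplit := psi_split E₁ u v z hu hv
  rw [← hw'def, hvS, huS, hrenuS] at hsplit
  rw [← hf₁def, ← hf₂def] at hsplit
  rw [hpsi₁', hpsi₂'] at hsplit
  rw [map_mul, map_mul, MvPolynomial.rename_C, MvPolynomial.rename_C] at hsplit
  rw [hrenwres₂] at hsplit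
  rw [hpsi₀'] at hsplit
  -- conclude
  refine ⟨d₀⁻¹ * d₁, d₀⁻¹ * d₂,
    mul_ne_zero (inv_ne_zero hd₀) hd₁, mul_ne_zero (inv_ne_zero hd₀) hd₂, ?_⟩
  have hC : (MvPolynomial.C ((d₀⁻¹) ^ 2) : MvPolynomial E K) *
      MvPolynomial.C (d₀ ^ 2) = 1 := by
    rw [← map_mul, ← mul_pow, inv_mul_cancel₀ hd₀]
    simp
  calc psi w
      = (MvPolynomial.C ((d₀⁻¹) ^ 2) * MvPolynomial.C (d₀ ^ 2)) * psi w := by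
        rw [hC, one_mul]
    _ = MvPolynomial.C ((d₀⁻¹) ^ 2) * (MvPolynomial.C (d₀ ^ 2) * psi w) := by
        ring
    _ = MvPolynomial.C ((d₀⁻¹) ^ 2) *
        (MvPolynomial.rename Subtype.val (psi wcon₁) *
          (MvPolynomial.C (d₁ ^ 2) * MvPolynomial.rename Subtype.val (psi wres₁)) +
        MvPolynomial.rename Subtype.val (psi wcon₂) *
          (MvPolynomial.C (d₂ ^ 2) * MvPolynomial.rename Subtype.val (psi wres₂))) := by
        rw [← hsplit]
    _ = _ := by
        simp only [mul_pow, map_mul]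
        ring


end Config
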